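/- For any c > 0 and d ≥ 2, the infimum of ∫_{B(0,1)} |Df(x)|^d dx over all C¹ embeddings f : B(0,1) → ℝ^d with vol(f(B(0,1))) = c equals d^{d/2} c. -/

import Mathlib

open MeasureTheory Metric Filter Topology
open scoped ENNReal

noncomputable section

/-- `ℝ^d` as Euclidean space. -/
abbrev E (d : ℕ) := EuclideanSpace ℝ (Fin d)

/-- The first standard basis vector `e₁`. -/
def e1 (d : ℕ) [NeZero d] : E d := EuclideanSpace.single 0 1

/-- `aₙ = (1 + 1/n) e₁`. -/
def a (d : ℕ) [NeZero d] (n : ℕ) : E d := (1 + 1/(n:ℝ)) • e1 d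

/-- `fₙ(x) = (2/n) (x - aₙ)/|x - aₙ|²`. -/
def f (d : ℕ) [NeZero d] (n : ℕ) (x : E d) : E d :=
  (2/(n:ℝ)) • (‖x - a d n‖^2)⁻¹ • (x - a d n)

/-- The Frobenius (Hilbert–Schmidt) norm of a linear map on `ℝ^d`. -/
def frob (d : ℕ) (A : E d →L[ℝ] E d) : ℝ :=
  Real.sqrt (∑ i, ‖A (EuclideanSpace.single i 1)‖^2)

/-- AM–GM for positive semidefinite matrices: `det N ≤ (trace N / d) ^ d`. -/
lemma det_le_trace_div_pow {d : ℕ} (hd : d ≠ 0) (N : Matrix (Fin d) (Fin d) ℝ)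
    (hN : N.PosSemidef) : N.det ≤ (N.trace / d) ^ d := by
  have hH := hN.isHermitian
  have hev : ∀ i, 0 ≤ hH.eigenvalues i := hN.eigenvalues_nonneg
  have hdet : N.det = ∏ i, hH.eigenvalues i := by
    simpa using hH.det_eq_prod_eigenvalues
  have htr : N.trace = ∑ i, hH.eigenvalues i := by
    simpa using hH.trace_eq_sum_eigenvalues
  have hgm := Real.geom_mean_le_arith_mean_weighted Finset.univ
      (fun _ => (d:ℝ)⁻¹) hH.eigenvalues (fun i _ => by positivity)
      (by simp [Finset.card_univ]; field_simp) (fun i _ => hev i)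
  have key : (∏ i, hH.eigenvalues i ^ ((d:ℝ)⁻¹)) ^ d = ∏ i, hH.eigenvalues i := by
    rw [← Finset.prod_pow]
    refine Finset.prod_congr rfl fun i _ => ?_
    rw [← Real.rpow_natCast (hH.eigenvalues i ^ ((d:ℝ)⁻¹)) d, ← Real.rpow_mul (hev i)]
    rw [inv_mul_cancel₀ (by exact_mod_cast hd), Real.rpow_one]
  rw [hdet, htr, ← key]
  have h1 : (0:ℝ) ≤ ∏ i, hH.eigenvalues i ^ ((d:ℝ)⁻¹) :=
    Finset.prod_nonneg fun i _ => Real.rpow_nonneg (hev i) _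
  refine pow_le_pow_left₀ h1 ?_ d
  calc (∏ i, hH.eigenvalues i ^ ((d:ℝ)⁻¹)) ≤ ∑ i, (d:ℝ)⁻¹ * hH.eigenvalues i := hgm
    _ = (∑ i, hH.eigenvalues i) / d := by rw [← Finset.mul_sum]; ring

lemma frob_nonneg (d : ℕ) (A : E d →L[ℝ] E d) : 0 ≤ frob d A := Real.sqrt_nonneg _

/-- Pointwise inequality: `d^(d/2) * |det A| ≤ (frob A)^d`. -/
lemma key_ineq {d : ℕ} (hd : d ≠ 0) (A : E d →L[ℝ] E d) :
    (d : ℝ) ^ ((d : ℝ)/2) * |A.det| ≤ (frob d A) ^ d := by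
  set b := (EuclideanSpace.basisFun (Fin d) ℝ).toBasis with hb
  set M := LinearMap.toMatrix b b A with hM
  set S := ∑ i, ‖A (EuclideanSpace.single i 1)‖^2 with hS
  have hS0 : 0 ≤ S := Finset.sum_nonneg fun i _ => by positivity
  have hdet : A.det = M.det := by
    rw [hM, LinearMap.det_toMatrix]
  have hnorm : ∀ i, ‖A (EuclideanSpace.single i 1)‖^2 = ∑ j, (M j i)^2 := by
    intro i
    have h1 : ∀ j, M j i = (A (EuclideanSpace.single i 1)) j := by
      intro j
      rw [hM, LinearMap.toMatrix_apply]
      simp [hb, EuclideanSpace.basisFun_apply]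
    rw [EuclideanSpace.norm_eq, Real.sq_sqrt (by positivity)]
    exact Finset.sum_congr rfl fun j _ => by rw [h1 j]; simp
  have hSM : S = ∑ i, ∑ j, (M j i)^2 := Finset.sum_congr rfl fun i _ => hnorm i
  set N := M.conjTranspose * M with hN
  have hpsd : N.PosSemidef := Matrix.posSemidef_conjTranspose_mul_self M
  have htrN : N.trace = S := by
    rw [hSM, hN, Matrix.trace]
    simp [Matrix.mul_apply, Matrix.conjTranspose_apply, Matrix.diag, sq]
  have hdetN : N.det = M.det ^ 2 := by
    rw [hN, Matrix.det_mul, Matrix.det_conjTranspose]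
    simp [sq]
  have hkey : M.det ^ 2 ≤ (S / d) ^ d := by
    rw [← hdetN, ← htrN]
    exact det_le_trace_div_pow hd N hpsd
  have hfrob : frob d A = Real.sqrt S := rfl
  have hd0 : (0:ℝ) < d := by exact_mod_cast Nat.pos_of_ne_zero hd
  have hsq : ((d : ℝ) ^ ((d : ℝ)/2) * |A.det|) ^ 2 ≤ ((frob d A) ^ d) ^ 2 := by
    have e1 : ((d : ℝ) ^ ((d : ℝ)/2) * |A.det|) ^ 2 = (d:ℝ)^d * M.det ^ 2 := by
      rw [mul_pow, ← Real.rpow_natCast ((d:ℝ)^((d:ℝ)/2)) 2, ← Real.rpow_mul hd0.le]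
      rw [sq_abs, hdet]
      norm_num
    have e2 : ((frob d A) ^ d) ^ 2 = S ^ d := by
      rw [hfrob, ← pow_mul, mul_comm d 2, pow_mul, Real.sq_sqrt hS0]
    rw [e1, e2]
    calc (d:ℝ)^d * M.det ^ 2 ≤ (d:ℝ)^d * (S / d) ^ d :=
          mul_le_mul_of_nonneg_left hkey (by positivity)
      _ = S ^ d := by rw [← mul_pow]; congr 1; field_simp
  have h1 : (0:ℝ) ≤ (d : ℝ) ^ ((d : ℝ)/2) * |A.det| := by positivity
  have h2 : (0:ℝ) ≤ (frob d A) ^ d := pow_nonneg (frob_nonneg d A) d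
  exact (pow_le_pow_iff_left₀ h1 h2 two_ne_zero).mp hsq

/-- Lower bound via the change of variables formula. -/
lemma lower_bound {d : ℕ} [NeZero d] {c : ℝ} (hc : 0 < c) (g : E d → E d)
    (hg : ContDiffOn ℝ 1 g (ball (0:E d) 1)) (hinj : Set.InjOn g (ball (0:E d) 1))
    (hint : IntegrableOn (fun x => (frob d (fderiv ℝ g x)) ^ d) (ball (0:E d) 1))
    (hvol : (volume (g '' ball (0:E d) 1)).toReal = c) :
    (d:ℝ)^((d:ℝ)/2) * c ≤ ∫ x in ball (0:E d) 1, (frob d (fderiv ℝ g x)) ^ d := by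
  have hd : d ≠ 0 := NeZero.ne d
  have hderiv : ∀ x ∈ ball (0:E d) 1,
      HasFDerivWithinAt g (fderiv ℝ g x) (ball (0:E d) 1) x := fun x hx =>
    (((hg.contDiffAt (isOpen_ball.mem_nhds hx)).differentiableAt
      one_ne_zero).hasFDerivAt).hasFDerivWithinAt
  have hcov : (∫⁻ x in ball (0:E d) 1, ENNReal.ofReal |(fderiv ℝ g x).det|) =
      volume (g '' ball (0:E d) 1) :=
    lintegral_abs_det_fderiv_eq_addHaar_image volume measurableSet_ball hderiv hinj
  have hm : Measurable fun x : E d => |(fderiv ℝ g x).det| :=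
    (ContinuousLinearMap.continuous_det.measurable.comp (measurable_fderiv ℝ g)).abs
  have hdetint : ∫ x in ball (0:E d) 1, |(fderiv ℝ g x).det| = c := by
    rw [MeasureTheory.integral_eq_lintegral_of_nonneg_ae
        (Filter.Eventually.of_forall fun x => abs_nonneg _)
        hm.aestronglyMeasurable.restrict, hcov, hvol]
  have hintdet : IntegrableOn
      (fun x => (d:ℝ)^((d:ℝ)/2) * |(fderiv ℝ g x).det|) (ball (0:E d) 1) := by
    refine hint.mono' ((hm.const_mul _).aestronglyMeasurable.restrict) ?_
    refine Filter.Eventually.of_forall fun x => ?_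
    rw [Real.norm_eq_abs, abs_of_nonneg (by positivity)]
    exact key_ineq hd _
  calc (d:ℝ)^((d:ℝ)/2) * c
      = ∫ x in ball (0:E d) 1, (d:ℝ)^((d:ℝ)/2) * |(fderiv ℝ g x).det| := by
        rw [MeasureTheory.integral_const_mul, hdetint]
    _ ≤ ∫ x in ball (0:E d) 1, (frob d (fderiv ℝ g x)) ^ d :=
        integral_mono hintdet hint fun x => key_ineq hd _

theorem stmt_19 (d : ℕ) [NeZero d] (hd : 2 ≤ d) (c : ℝ) (hc : 0 < c) :
    IsGLB
      {y : ℝ | ∃ g : E d → E d,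
        ContDiffOn ℝ 1 g (ball (0 : E d) 1) ∧
        Set.InjOn g (ball (0 : E d) 1) ∧
        IntegrableOn (fun x => (frob d (fderiv ℝ g x)) ^ d) (ball (0 : E d) 1) ∧
        (volume (g '' ball (0 : E d) 1)).toReal = c ∧
        y = ∫ x in ball (0 : E d) 1, (frob d (fderiv ℝ g x)) ^ d}
      ((d : ℝ) ^ ((d : ℝ)/2) * c) := by
  have hd0 : d ≠ 0 := NeZero.ne d
  have hd0' : (0:ℝ) < d := by exact_mod_cast Nat.pos_of_ne_zero hd0
  refine IsLeast.isGLB ⟨?_, ?_⟩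
  swap
  · rintro y ⟨g, h1, h2, h3, h4, rfl⟩
    exact lower_bound hc g h1 h2 h3 h4
  -- membership : the linear scaling map `x ↦ l • x` attains the bound
  set V := (volume (ball (0:E d) 1)).toReal with hVdef
  have hV : 0 < V :=
    ENNReal.toReal_pos (measure_ball_pos volume 0 one_pos).ne' measure_ball_lt_top.ne
  set l := ((c / V) ^ ((d:ℝ)⁻¹) : ℝ) with hldef
  have hl : 0 < l := Real.rpow_pos_of_pos (div_pos hc hV) _
  have hld : l ^ d = c / V := by
    rw [hldef, ← Real.rpow_natCast ((c/V) ^ ((d:ℝ)⁻¹)) d, ← Real.rpow_mul (div_pos hc hV).le,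
      inv_mul_cancel₀ (by exact_mod_cast hd0), Real.rpow_one]
  have hfd : ∀ x : E d, fderiv ℝ (fun y : E d => l • y) x
      = l • ContinuousLinearMap.id ℝ (E d) := fun x =>
    ((hasFDerivAt_id x).const_smul l).fderiv
  have hfrob : frob d (l • ContinuousLinearMap.id ℝ (E d)) = Real.sqrt d * l := by
    unfold frob
    have : ∀ i : Fin d, ‖(l • ContinuousLinearMap.id ℝ (E d)) (EuclideanSpace.single i 1)‖^2
        = l ^ 2 := by
      intro i
      simp [norm_smul, EuclideanSpace.norm_single, abs_of_pos hl, sq]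
    rw [Finset.sum_congr rfl fun i _ => this i]
    simp only [Finset.sum_const, Finset.card_univ, Fintype.card_fin, nsmul_eq_mul]
    rw [Real.sqrt_mul (by positivity), Real.sqrt_sq hl.le]
  have hconst : (fun x : E d => frob d (fderiv ℝ (fun y : E d => l • y) x) ^ d)
      = fun _ => (Real.sqrt d * l) ^ d := by
    funext x
    rw [hfd x, hfrob]
  have hsqd : Real.sqrt d ^ d = (d:ℝ) ^ ((d:ℝ)/2) := by
    rw [Real.sqrt_eq_rpow, ← Real.rpow_natCast ((d:ℝ) ^ ((1:ℝ)/2)) d,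
      ← Real.rpow_mul hd0'.le]
    congr 1
    ring
  refine ⟨fun x => l • x, (contDiff_id.const_smul l).contDiffOn, ?_, ?_, ?_, ?_⟩
  · intro x _ y _ h
    exact smul_right_injective (E d) hl.ne' h
  · rw [hconst]
    exact integrableOn_const measure_ball_lt_top.ne
  · have himg : (fun x : E d => l • x) '' ball (0:E d) 1 = ball (0:E d) l := by
      rw [Set.image_smul, _root_.smul_ball hl.ne' (0:E d) 1, smul_zero]
      simp [Real.norm_eq_abs, abs_of_pos hl]
    rw [himg, Measure.addHaar_ball volume (0:E d) hl.le, finrank_euclideanSpace_fin,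
      ENNReal.toReal_mul, ENNReal.toReal_ofReal (by positivity), ← hVdef, hld]
    field_simp
  · rw [hconst, MeasureTheory.setIntegral_const, measureReal_def, ← hVdef, mul_pow, hsqd, hld]
    rw [smul_eq_mul]
    field_simp
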